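/- Let F : ℝⁿ → ℝ be computed by a ReLU neural network and let x₀ ∈ ℝⁿ. The locally active region L(x₀) = { x ∈ ℝⁿ : for every layer i and neuron j, (W_i z_i(x) + b_i)_j ≥ 0 if and only if (W_i z_i(x₀) + b_i)_j ≥ 0 } can be written as a finite intersection of half-spaces with possibly strict inequalities; that is, there exist m ∈ ℕ, vectors a₁,…,a_m ∈ ℝⁿ, scalars c₁,…,c_m, and flags strict₁,…,strict_m ∈ {true,false} such that L(x₀) = { x : for every i, ⟨a_i, x⟩ < c_i if strict_i = true, and ⟨a_i, x⟩ ≤ c_i if strict_i = false }. -/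

import Mathlib

/-- Componentwise ReLU: `σ(z) = max(z, 0)` applied to each coordinate. -/
noncomputable def reluVec {m : ℕ} (v : Fin m → ℝ) : Fin m → ℝ := fun j => max (v j) 0

/-- A feedforward ReLU network with `n` inputs, `k` hidden layers of `N` neurons
each, and a single output.  `W₀, b₀` connect the input to the first hidden layer,
`W i, b i` (used for `1 ≤ i ≤ k - 1`) connect hidden layer `i` to hidden layer
`i + 1`, and `Wout, bout` (the paper's `W_k, b_k`) connect the last hidden layer
to the output. -/
structure ReluNet (n N k : ℕ) where
  W₀ : Matrix (Fin N) (Fin n) ℝ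
  b₀ : Fin N → ℝ
  W : ℕ → Matrix (Fin N) (Fin N) ℝ
  b : ℕ → Fin N → ℝ
  Wout : Fin N → ℝ
  bout : ℝ

namespace ReluNet

variable {n N k : ℕ}

/-- `z net x i` is the paper's `z_{i+1}(x)`, the output of hidden layer `i + 1`:
`z₁ = σ(W₀ x + b₀)` and `z_{i+1} = σ(W_i z_i + b_i)`. -/
noncomputable def z (net : ReluNet n N k) (x : Fin n → ℝ) : ℕ → Fin N → ℝ
  | 0 => reluVec (net.W₀.mulVec x + net.b₀)
  | i + 1 => reluVec ((net.W (i + 1)).mulVec (z net x i) + net.b (i + 1))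

/-- `preact net x i` is the paper's pre-activation `W_i z_i(x) + b_i` of hidden
layer `i + 1`; neuron `j` of that layer is activated at `x` iff
`0 ≤ preact net x i j`. -/
noncomputable def preact (net : ReluNet n N k) (x : Fin n → ℝ) : ℕ → Fin N → ℝ
  | 0 => net.W₀.mulVec x + net.b₀
  | i + 1 => (net.W (i + 1)).mulVec (net.z x i) + net.b (i + 1)

/-- The function computed by the network: `F(x) = W_k z_k(x) + b_k`. -/
noncomputable def F (net : ReluNet n N k) (x : Fin n → ℝ) : ℝ :=
  (∑ j, net.Wout j * net.z x (k - 1) j) + net.bout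

end ReluNet

/-- The locally active region of `x₀`: the set of inputs activating exactly the
same neurons as `x₀` (neuron `j` of hidden layer `i + 1` is activated at `x` iff
`0 ≤ preact net x i j`). -/
def ReluNet.activeRegion {n N k : ℕ} (net : ReluNet n N k) (x₀ : Fin n → ℝ) :
    Set (Fin n → ℝ) :=
  {x | ∀ i < k, ∀ j, (0 ≤ net.preact x i j ↔ 0 ≤ net.preact x₀ i j)}

namespace ReluNetAux

variable {n N k : ℕ}

/-- Satisfaction of a single (possibly strict) half-space constraint. -/
def satC (h : (Fin n → ℝ) × ℝ × Bool) (x : Fin n → ℝ) : Prop :=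
  if h.2.2 then (∑ j, h.1 j * x j) < h.2.1 else (∑ j, h.1 j * x j) ≤ h.2.1

/-- Evaluation of an affine function. -/
def aeval (g : (Fin n → ℝ) × ℝ) (x : Fin n → ℝ) : ℝ := (∑ l, g.1 l * x l) + g.2

lemma z_eq (net : ReluNet n N k) (x : Fin n → ℝ) (i : ℕ) :
    net.z x i = reluVec (net.preact x i) := by
  cases i <;> rfl

lemma key (net : ReluNet n N k) (x₀ : Fin n → ℝ) (i : ℕ) :
    ∃ L : List ((Fin n → ℝ) × ℝ × Bool),
      (∀ x, (∀ i' < i, ∀ j, (0 ≤ net.preact x i' j ↔ 0 ≤ net.preact x₀ i' j)) ↔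
        ∀ h ∈ L, satC h x) ∧
      ∃ g : Fin N → (Fin n → ℝ) × ℝ,
        ∀ x, (∀ i' < i, ∀ j, (0 ≤ net.preact x i' j ↔ 0 ≤ net.preact x₀ i' j)) →
          ∀ j, net.preact x i j = aeval (g j) x := by
  induction i with
  | zero =>
    refine ⟨[], by simp, ⟨fun j => (fun l => net.W₀ j l, net.b₀ j), ?_⟩⟩
    intro x _ j
    simp [ReluNet.preact, aeval, Matrix.mulVec, dotProduct]
  | succ i ih =>
    obtain ⟨L, hL, g, hg⟩ := ih
    set con : Fin N → (Fin n → ℝ) × ℝ × Bool := fun j =>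
      if 0 ≤ net.preact x₀ i j then (fun l => -(g j).1 l, (g j).2, false)
      else ((g j).1, -(g j).2, true) with hcon
    have hprev : ∀ x, (∀ i' < i + 1, ∀ j,
        (0 ≤ net.preact x i' j ↔ 0 ≤ net.preact x₀ i' j)) →
        (∀ i' < i, ∀ j, (0 ≤ net.preact x i' j ↔ 0 ≤ net.preact x₀ i' j)) :=
      fun x hx i' hi' => hx i' (hi'.trans (Nat.lt_succ_self i))
    -- satisfaction of `con j` on the previous region is exactly the layer-`i` condition
    have hconIff : ∀ x, (∀ i' < i, ∀ j,
        (0 ≤ net.preact x i' j ↔ 0 ≤ net.preact x₀ i' j)) → ∀ j,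
        (satC (con j) x ↔ (0 ≤ net.preact x i j ↔ 0 ≤ net.preact x₀ i j)) := by
      intro x hx j
      have hgx := hg x hx j
      by_cases h₀ : 0 ≤ net.preact x₀ i j
      · simp only [hcon, if_pos h₀, satC, aeval] at hgx ⊢
        rw [if_neg (by simp : ¬ (false = true)), hgx]
        constructor
        · intro hle
          have : 0 ≤ (∑ l, (g j).1 l * x l) + (g j).2 := by
            have := Finset.sum_neg_distrib (s := Finset.univ)
              (f := fun l => (g j).1 l * x l)
            simp only [neg_mul] at hle
            rw [Finset.sum_neg_distrib] at hle
            linarith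
          simpa [h₀] using this
        · intro hiff
          have : 0 ≤ (∑ l, (g j).1 l * x l) + (g j).2 := hiff.2 h₀
          simp only [neg_mul]
          rw [Finset.sum_neg_distrib]
          linarith
      · simp only [hcon, if_neg h₀, satC, aeval] at hgx ⊢
        rw [if_pos trivial, hgx]
        constructor
        · intro hlt
          constructor
          · intro hle; linarith
          · intro h; exact absurd h h₀
        · intro hiff
          have : ¬ 0 ≤ (∑ l, (g j).1 l * x l) + (g j).2 := fun hc => h₀ (hiff.1 hc)
          linarith [not_le.1 this]
    refine ⟨L ++ List.ofFn con, ?_, ?_⟩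
    · intro x
      constructor
      · intro hx h hh
        have hxp := hprev x hx
        rcases List.mem_append.1 hh with h1 | h2
        · exact (hL x).1 hxp h h1
        · obtain ⟨j, rfl⟩ := List.mem_ofFn.1 h2
          exact (hconIff x hxp j).2 (hx i (Nat.lt_succ_self i) j)
      · intro hAll
        have hxp : ∀ i' < i, ∀ j,
            (0 ≤ net.preact x i' j ↔ 0 ≤ net.preact x₀ i' j) :=
          (hL x).2 (fun h hh => hAll h (List.mem_append.2 (Or.inl hh)))
        intro i' hi' j
        rcases Nat.lt_succ_iff_lt_or_eq.1 hi' with h | rfl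
        · exact hxp i' h j
        · exact (hconIff x hxp j).1
            (hAll (con j) (List.mem_append.2 (Or.inr (List.mem_ofFn.2 ⟨j, rfl⟩))))
    · -- affine representation of the next layer's pre-activation
      set hf : Fin N → (Fin n → ℝ) × ℝ := fun j =>
        if 0 ≤ net.preact x₀ i j then g j else (0, 0) with hhf
      refine ⟨fun j' => (fun l => ∑ j, net.W (i + 1) j' j * (hf j).1 l,
        (∑ j, net.W (i + 1) j' j * (hf j).2) + net.b (i + 1) j'), ?_⟩
      intro x hx j'
      have hxp := hprev x hx
      have hz : ∀ j, net.z x i j = aeval (hf j) x := by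
        intro j
        have hgx := hg x hxp j
        have hiff := hx i (Nat.lt_succ_self i) j
        rw [z_eq]
        by_cases h₀ : 0 ≤ net.preact x₀ i j
        · have h1 : 0 ≤ net.preact x i j := hiff.2 h₀
          have hmax : reluVec (net.preact x i) j = net.preact x i j := max_eq_left h1
          rw [hmax, hgx, hhf]
          simp [if_pos h₀]
        · have h1 : net.preact x i j < 0 := not_le.1 fun hc => h₀ (hiff.1 hc)
          have hmax : reluVec (net.preact x i) j = 0 := max_eq_right h1.le
          rw [hmax, hhf]
          simp [if_neg h₀, aeval]
      show net.preact x (i + 1) j' = _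
      simp only [ReluNet.preact, Matrix.mulVec, dotProduct, Pi.add_apply]
      have : ∀ j, net.W (i + 1) j' j * net.z x i j
          = net.W (i + 1) j' j * ((∑ l, (hf j).1 l * x l) + (hf j).2) := by
        intro j; rw [hz j]; rfl
      rw [Finset.sum_congr rfl fun j _ => this j]
      simp only [aeval, mul_add, Finset.sum_add_distrib, Finset.mul_sum, Finset.sum_mul]
      rw [Finset.sum_comm]
      have : ∀ l, ∀ j, net.W (i + 1) j' j * ((hf j).1 l * x l)
          = net.W (i + 1) j' j * (hf j).1 l * x l := fun l j => (mul_assoc _ _ _).symm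
      rw [Finset.sum_congr rfl fun l _ => Finset.sum_congr rfl fun j _ => this l j]
      ring

end ReluNetAux

/-- The locally active region `L(x₀)` of a ReLU network is a finite intersection
of half-spaces with possibly strict inequalities: there are `a i ∈ ℝⁿ`, `c i ∈ ℝ`
and flags `strict i` with `L(x₀) = {x | ∀ i, ⟨a i, x⟩ < c i if strict i,
and ⟨a i, x⟩ ≤ c i otherwise}`. -/
theorem activeRegion_is_polyhedron {n N k : ℕ} (net : ReluNet n N k)
    (x₀ : Fin n → ℝ) :
    ∃ (m : ℕ) (a : Fin m → Fin n → ℝ) (c : Fin m → ℝ) (strict : Fin m → Bool),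
      net.activeRegion x₀ =
        {x | ∀ i, if strict i then (∑ j, a i j * x j) < c i
                  else (∑ j, a i j * x j) ≤ c i} := by
  obtain ⟨L, hL, -⟩ := ReluNetAux.key net x₀ k
  refine ⟨L.length, fun i => (L.get i).1, fun i => (L.get i).2.1,
    fun i => (L.get i).2.2, ?_⟩
  ext x
  simp only [ReluNet.activeRegion, Set.mem_setOf_eq]
  rw [hL x]
  constructor
  · intro H i
    have := H (L.get i) (L.get_mem i)
    simpa [ReluNetAux.satC] using this
  · intro H h hh
    obtain ⟨i, rfl⟩ := List.mem_iff_get.1 hh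
    simpa [ReluNetAux.satC] using H i
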